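/- Let x, x̃ ∈ ℂ^n be nonzero vectors and ε > 0. If ‖x̃ − x‖ ≤ ε‖x‖, then the total variation distance between the length-square distributions of x and x̃ is at most 2ε, i.e. (1/2)·Σ_{j=1}^n |q^(x)_j − q^(x̃)_j| ≤ 2ε. -/
import Mathlib


/-- If `x, x̃ ∈ ℂ^n` are nonzero, `ε > 0` and `‖x̃ − x‖ ≤ ε‖x‖`, then the
total variation distance between the length-square distributions of `x` and `x̃` is at most
`2ε`, i.e. `(1/2)·Σ_j |q^(x)_j − q^(x̃)_j| ≤ 2ε` where `q^(v)_j = |v_j|²/‖v‖²`. -/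
theorem stmt_1 {n : ℕ} (x xt : EuclideanSpace ℂ (Fin n)) (ε : ℝ) (hε : 0 < ε)
    (hx : x ≠ 0) (hxt : xt ≠ 0) (h : ‖xt - x‖ ≤ ε * ‖x‖) :
    (1 / 2 : ℝ) * ∑ j, |‖x j‖ ^ 2 / ‖x‖ ^ 2 - ‖xt j‖ ^ 2 / ‖xt‖ ^ 2| ≤ 2 * ε := by
  have hxn : (0:ℝ) < ‖x‖ := norm_pos_iff.mpr hx
  have hxtn : (0:ℝ) < ‖xt‖ := norm_pos_iff.mpr hxt
  set a : EuclideanSpace ℂ (Fin n) := (‖x‖⁻¹ : ℝ) • x with ha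
  set b : EuclideanSpace ℂ (Fin n) := (‖xt‖⁻¹ : ℝ) • xt with hb
  have hna : ‖a‖ = 1 := by
    rw [ha, norm_smul, Real.norm_eq_abs, abs_of_pos (inv_pos.mpr hxn),
      inv_mul_cancel₀ hxn.ne']
  have hnb : ‖b‖ = 1 := by
    rw [hb, norm_smul, Real.norm_eq_abs, abs_of_pos (inv_pos.mpr hxtn),
      inv_mul_cancel₀ hxtn.ne']
  have haj : ∀ j, ‖a j‖ = ‖x j‖ / ‖x‖ := by
    intro j
    rw [ha]
    simp [norm_smul, abs_of_pos (inv_pos.mpr hxn), inv_mul_eq_div]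
  have hbj : ∀ j, ‖b j‖ = ‖xt j‖ / ‖xt‖ := by
    intro j
    rw [hb]
    simp [norm_smul, abs_of_pos (inv_pos.mpr hxtn), inv_mul_eq_div]
  -- bound ‖a - b‖ ≤ 2 ε
  have hab : ‖a - b‖ ≤ 2 * ε := by
    have key : a - b = (‖x‖⁻¹ : ℝ) • (x - xt) + ((‖x‖⁻¹ - ‖xt‖⁻¹ : ℝ)) • xt := by
      rw [ha, hb, smul_sub, sub_smul]
      abel
    have h1 : ‖(‖x‖⁻¹ : ℝ) • (x - xt)‖ ≤ ε := by
      rw [norm_smul, Real.norm_eq_abs, abs_of_pos (inv_pos.mpr hxn)]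
      rw [norm_sub_rev] at h
      calc ‖x‖⁻¹ * ‖x - xt‖ ≤ ‖x‖⁻¹ * (ε * ‖x‖) := by
            apply mul_le_mul_of_nonneg_left h (le_of_lt (inv_pos.mpr hxn))
        _ = ε := by field_simp
    have h2 : ‖((‖x‖⁻¹ - ‖xt‖⁻¹ : ℝ)) • xt‖ ≤ ε := by
      rw [norm_smul, Real.norm_eq_abs]
      have e : (‖x‖⁻¹ - ‖xt‖⁻¹ : ℝ) = (‖xt‖ - ‖x‖)/(‖x‖*‖xt‖) := by
        field_simp
      rw [e, abs_div, abs_of_pos (mul_pos hxn hxtn)]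
      have h3 : |‖xt‖ - ‖x‖| ≤ ε * ‖x‖ := (abs_norm_sub_norm_le xt x).trans h
      rw [div_mul_eq_mul_div, div_le_iff₀ (mul_pos hxn hxtn)]
      calc |‖xt‖ - ‖x‖| * ‖xt‖ ≤ (ε * ‖x‖) * ‖xt‖ :=
            mul_le_mul_of_nonneg_right h3 hxtn.le
        _ = ε * (‖x‖ * ‖xt‖) := by ring
    calc ‖a - b‖ ≤ ‖(‖x‖⁻¹ : ℝ) • (x - xt)‖ + ‖((‖x‖⁻¹ - ‖xt‖⁻¹ : ℝ)) • xt‖ := by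
          rw [key]; exact norm_add_le _ _
      _ ≤ ε + ε := add_le_add h1 h2
      _ = 2 * ε := by ring
  have hsum : ∀ v : EuclideanSpace ℂ (Fin n), ∑ j, ‖v j‖^2 = ‖v‖^2 := by
    intro v
    rw [EuclideanSpace.norm_eq, Real.sq_sqrt (by positivity)]
  have S := Finset.sum_mul_sq_le_sq_mul_sq Finset.univ
    (fun j => ‖a j‖ + ‖b j‖) (fun j => |‖a j‖ - ‖b j‖|)
  have e1 : ∑ j, (‖a j‖ + ‖b j‖) * |‖a j‖ - ‖b j‖| = ∑ j, |‖a j‖^2 - ‖b j‖^2| := by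
    apply Finset.sum_congr rfl
    intro j _
    rw [← abs_of_nonneg (add_nonneg (norm_nonneg _) (norm_nonneg _)), ← abs_mul]
    congr 1
    ring
  have e2 : ∑ j, (‖a j‖ + ‖b j‖)^2 ≤ 4 := by
    have : ∑ j, (‖a j‖ + ‖b j‖)^2 ≤ ∑ j, (2*‖a j‖^2 + 2*‖b j‖^2) :=
      Finset.sum_le_sum fun j _ => by nlinarith [sq_nonneg (‖a j‖ - ‖b j‖)]
    have e : ∑ j, (2*‖a j‖^2 + 2*‖b j‖^2)
        = 2 * (∑ j, ‖a j‖^2) + 2 * (∑ j, ‖b j‖^2) := by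
      rw [Finset.sum_add_distrib, Finset.mul_sum, Finset.mul_sum]
    rw [e, hsum a, hsum b, hna, hnb] at this
    linarith
  have e3 : ∑ j, |‖a j‖ - ‖b j‖|^2 ≤ ‖a - b‖^2 := by
    rw [← hsum (a - b)]
    apply Finset.sum_le_sum
    intro j _
    rw [sq_abs]
    have h4 : |‖a j‖ - ‖b j‖| ≤ ‖a j - b j‖ := abs_norm_sub_norm_le (a j) (b j)
    have h5 : (a - b) j = a j - b j := rfl
    rw [h5]
    nlinarith [abs_nonneg (‖a j‖ - ‖b j‖), norm_nonneg (a j - b j), sq_abs (‖a j‖ - ‖b j‖)]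
  have T0 : (0:ℝ) ≤ ∑ j, |‖a j‖^2 - ‖b j‖^2| :=
    Finset.sum_nonneg fun j _ => abs_nonneg _
  have Tle : ∑ j, |‖a j‖^2 - ‖b j‖^2| ≤ 2 * ‖a - b‖ := by
    rw [e1] at S
    have g2 : (0:ℝ) ≤ ∑ j, |‖a j‖ - ‖b j‖|^2 :=
      Finset.sum_nonneg fun j _ => sq_nonneg _
    nlinarith [norm_nonneg (a - b), S, e2, e3]
  have egoal : ∑ j, |‖x j‖ ^ 2 / ‖x‖ ^ 2 - ‖xt j‖ ^ 2 / ‖xt‖ ^ 2|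
      = ∑ j, |‖a j‖^2 - ‖b j‖^2| := by
    apply Finset.sum_congr rfl
    intro j _
    rw [haj j, hbj j, div_pow, div_pow]
  rw [egoal]
  linarith
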